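/- For i.i.d. blocks with codeword lengths satisfying N·Ĥ(x̂|ŷ) ≤ l(x,y) ≤ N·(Ĥ(x|y) + ε_N) (empirical conditional entropy plus vanishing overhead ε_N ≤ (2 + |𝒳||𝒴|log₂(N+1))/N), for any r with H(p_{X|Y}) < r < log₂|𝒳| and any ε > 0 there exist N and K < ∞ such that for all n ≥ 1, P(Σ_{i=1}^n l(X⃗_i, Y⃗_i) > nNr) ≤ K·2^{−nN(E^u_{si,b}(r) − ε)}, where E^u_{si,b}(r) = min_{q: H(q_{X|Y}) ≥ r} D(q_{XY}‖p_{XY}). -/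

import Mathlib

open scoped Classical

/-- Conditional Shannon entropy `H(X|Y)` (in bits) of a joint pmf on `𝒳 × 𝒴`. -/
noncomputable def condEnt {𝒳 𝒴 : Type*} [Fintype 𝒳] [Fintype 𝒴] (q : 𝒳 × 𝒴 → ℝ) : ℝ :=
  -∑ z : 𝒳 × 𝒴, q z * Real.logb 2 (q z / ∑ x, q (x, z.2))

/-- KL divergence (in bits) between pmfs on a finite set. -/
noncomputable def klDiv {α : Type*} [Fintype α] (q p : α → ℝ) : ℝ :=
  ∑ a, q a * Real.logb 2 (q a / p a)

/-- The empirical joint distribution of a length-`N` block of symbol pairs. -/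
noncomputable def empDist {𝒳 𝒴 : Type*} [Fintype 𝒳] [Fintype 𝒴] {N : ℕ}
    (xv : Fin N → 𝒳) (yv : Fin N → 𝒴) (z : 𝒳 × 𝒴) : ℝ :=
  ((Finset.univ.filter (fun i => (xv i, yv i) = z)).card : ℝ) / (N : ℝ)

/-- two-term log-sum inequality, natural log version -/
lemma logSum2 {a b a' b' : ℝ} (ha : 0 ≤ a) (hab : a ≤ b) (ha' : 0 ≤ a') (hab' : a' ≤ b') :
    (a + a') * Real.log ((a + a') / (b + b')) ≤ a * Real.log (a / b) + a' * Real.log (a' / b') := by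
  rcases eq_or_lt_of_le (ha.trans hab) with hb | hb
  · have hA : a = 0 := le_antisymm (hb ▸ hab) ha
    simp [← hb, hA]
  rcases eq_or_lt_of_le (ha'.trans hab') with hb' | hb'
  · have hA : a' = 0 := le_antisymm (hb' ▸ hab') ha'
    simp [← hb', hA]
  have hbb : 0 < b + b' := by linarith
  have key := Real.convexOn_mul_log.2 (Set.mem_Ici.2 (div_nonneg ha hb.le))
    (Set.mem_Ici.2 (div_nonneg ha' hb'.le))
    (le_of_lt (div_pos hb hbb)) (le_of_lt (div_pos hb' hbb))
    (by field_simp)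
  simp only [smul_eq_mul] at key
  have e1 : b / (b + b') * (a / b) + b' / (b + b') * (a' / b') = (a + a') / (b + b') := by
    rw [div_mul_div_comm, div_mul_div_comm, mul_comm b a, mul_comm b' a',
      mul_comm (b + b') b, mul_comm (b + b') b', mul_comm a b, mul_comm a' b',
      mul_div_mul_left _ _ hb.ne', mul_div_mul_left _ _ hb'.ne', ← add_div]
  rw [e1] at key
  have key2 := mul_le_mul_of_nonneg_left key hbb.le
  have e2 : (b + b') * ((a + a') / (b + b') * Real.log ((a + a') / (b + b'))) =
      (a + a') * Real.log ((a + a') / (b + b')) := by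
    rw [← mul_assoc, mul_div_cancel₀ _ hbb.ne']
  have t1 : (b + b') * (b / (b + b') * (a / b * Real.log (a / b))) = a * Real.log (a / b) := by
    rw [← mul_assoc, mul_div_cancel₀ _ hbb.ne', ← mul_assoc, mul_div_cancel₀ _ hb.ne']
  have t2 : (b + b') * (b' / (b + b') * (a' / b' * Real.log (a' / b'))) =
      a' * Real.log (a' / b') := by
    rw [← mul_assoc, mul_div_cancel₀ _ hbb.ne', ← mul_assoc, mul_div_cancel₀ _ hb'.ne']
  have e3 : (b + b') * (b / (b + b') * (a / b * Real.log (a / b)) +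
      b' / (b + b') * (a' / b' * Real.log (a' / b'))) =
      a * Real.log (a / b) + a' * Real.log (a' / b') := by
    rw [mul_add, t1, t2]
  rw [e2, e3] at key2
  exact key2

lemma logSum2b {a b a' b' : ℝ} (ha : 0 ≤ a) (hab : a ≤ b) (ha' : 0 ≤ a') (hab' : a' ≤ b') :
    (a + a') * Real.logb 2 ((a + a') / (b + b')) ≤
      a * Real.logb 2 (a / b) + a' * Real.logb 2 (a' / b') := by
  simp only [Real.logb, ← mul_div_assoc, ← add_div]
  have hl2 : 0 < Real.log 2 := Real.log_pos one_lt_two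
  exact div_le_div_of_nonneg_right (logSum2 ha hab ha' hab') hl2.le |>.trans_eq rfl

lemma condEnt_add_le {𝒳 𝒴 : Type*} [Fintype 𝒳] [Fintype 𝒴] (q q' : 𝒳 × 𝒴 → ℝ)
    (hq : ∀ z, 0 ≤ q z) (hq' : ∀ z, 0 ≤ q' z) :
    condEnt q + condEnt q' ≤ condEnt (fun z => q z + q' z) := by
  unfold condEnt
  rw [← neg_add, neg_le_neg_iff, ← Finset.sum_add_distrib]
  refine Finset.sum_le_sum fun z _ => ?_
  have h1 : q z ≤ ∑ x, q (x, z.2) :=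
    Finset.single_le_sum (f := fun x => q (x, z.2)) (fun i _ => hq _) (Finset.mem_univ z.1)
  have h2 : q' z ≤ ∑ x, q' (x, z.2) :=
    Finset.single_le_sum (f := fun x => q' (x, z.2)) (fun i _ => hq' _) (Finset.mem_univ z.1)
  have := logSum2b (hq z) h1 (hq' z) h2
  simpa [Finset.sum_add_distrib] using this

lemma sum_condEnt_le {𝒳 𝒴 ι : Type*} [Fintype 𝒳] [Fintype 𝒴] (s : Finset ι)
    (f : ι → 𝒳 × 𝒴 → ℝ) (hf : ∀ i z, 0 ≤ f i z) :
    ∑ i ∈ s, condEnt (f i) ≤ condEnt (fun z => ∑ i ∈ s, f i z) := by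
  induction s using Finset.cons_induction with
  | empty => simp [condEnt]
  | cons a s ha ih =>
    rw [Finset.sum_cons]
    refine le_trans (add_le_add_right ih _) (le_trans (condEnt_add_le (f a)
      (fun z => ∑ i ∈ s, f i z) (hf a) (fun z => Finset.sum_nonneg fun i _ => hf i z)) ?_)
    have : (fun z : 𝒳 × 𝒴 => ∑ x ∈ Finset.cons a s ha, f x z)
        = fun z => f a z + ∑ i ∈ s, f i z := funext fun z => Finset.sum_cons _
    rw [this]

lemma condEnt_smul {𝒳 𝒴 : Type*} [Fintype 𝒳] [Fintype 𝒴] {a : ℝ} (ha : 0 < a)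
    (q : 𝒳 × 𝒴 → ℝ) : condEnt (fun z => a * q z) = a * condEnt q := by
  unfold condEnt
  simp only [← Finset.mul_sum, mul_div_mul_left _ _ ha.ne', mul_assoc]
  ring

noncomputable def entAux {𝒳 𝒴 : Type*} [Fintype 𝒳] [Fintype 𝒴] (q : 𝒳 × 𝒴 → ℝ) : ℝ :=
  (∑ z : 𝒳 × 𝒴, Real.negMulLog (q z) - ∑ y : 𝒴, Real.negMulLog (∑ x, q (x, y))) / Real.log 2

noncomputable def klAux {α : Type*} [Fintype α] (p q : α → ℝ) : ℝ :=
  ∑ a, (-Real.negMulLog (q a) - q a * Real.log (p a)) / Real.log 2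

lemma continuous_entAux {𝒳 𝒴 : Type*} [Fintype 𝒳] [Fintype 𝒴] :
    Continuous fun q : 𝒳 × 𝒴 → ℝ => entAux q := by
  unfold entAux
  refine Continuous.div_const (Continuous.sub ?_ ?_) _
  · exact continuous_finset_sum _ fun z _ => Real.continuous_negMulLog.comp (continuous_apply z)
  · exact continuous_finset_sum _ fun y _ =>
      Real.continuous_negMulLog.comp (continuous_finset_sum _ fun x _ => continuous_apply (x, y))

lemma continuous_klAux {α : Type*} [Fintype α] (p : α → ℝ) :
    Continuous fun q : α → ℝ => klAux p q := by
  unfold klAux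
  refine continuous_finset_sum _ fun a _ => Continuous.div_const (Continuous.sub ?_ ?_) _
  · exact (Real.continuous_negMulLog.comp (continuous_apply a)).neg
  · exact (continuous_apply a).mul continuous_const

lemma condEnt_eq_entAux {𝒳 𝒴 : Type*} [Fintype 𝒳] [Fintype 𝒴] (q : 𝒳 × 𝒴 → ℝ)
    (hq : ∀ z, 0 ≤ q z) : condEnt q = entAux q := by
  have hterm : ∀ z : 𝒳 × 𝒴, q z * Real.logb 2 (q z / ∑ x, q (x, z.2)) =
      q z * Real.logb 2 (q z) - q z * Real.logb 2 (∑ x, q (x, z.2)) := by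
    intro z
    rcases eq_or_lt_of_le (hq z) with h0 | h0
    · simp [← h0]
    · have hS : 0 < ∑ x, q (x, z.2) :=
        lt_of_lt_of_le h0 (Finset.single_le_sum (f := fun x => q (x, z.2))
          (fun i _ => hq _) (Finset.mem_univ z.1))
      rw [Real.logb_div h0.ne' hS.ne', mul_sub]
  have hsum2 : ∑ z : 𝒳 × 𝒴, q z * Real.logb 2 (∑ x, q (x, z.2)) =
      ∑ y : 𝒴, (∑ x, q (x, y)) * Real.logb 2 (∑ x, q (x, y)) := by
    rw [Fintype.sum_prod_type_right]
    refine Finset.sum_congr rfl fun y _ => ?_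
    show ∑ x, q (x, y) * Real.logb 2 (∑ x', q (x', y)) = _
    rw [← Finset.sum_mul]
  have hb : ∀ x : ℝ, x * Real.logb 2 x = -Real.negMulLog x / Real.log 2 := by
    intro x
    simp [Real.negMulLog, Real.logb, mul_div_assoc]
  simp only [condEnt, hterm, Finset.sum_sub_distrib, hsum2, hb, entAux]
  rw [← Finset.sum_div, ← Finset.sum_div]
  field_simp
  simp only [Finset.sum_neg_distrib]
  ring
lemma klDiv_eq_klAux {α : Type*} [Fintype α] (p q : α → ℝ) (hp : ∀ a, 0 ≤ p a)
    (hq : ∀ a, 0 ≤ q a) (hac : ∀ a, p a = 0 → q a = 0) : klDiv q p = klAux p q := by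
  unfold klDiv klAux
  refine Finset.sum_congr rfl fun a _ => ?_
  rcases eq_or_lt_of_le (hq a) with h0 | h0
  · simp [← h0, Real.negMulLog]
  · have hpa : 0 < p a := by
      rcases eq_or_lt_of_le (hp a) with h1 | h1
      · exact absurd (hac a h1.symm) h0.ne'
      · exact h1
    rw [Real.logb_div h0.ne' hpa.ne']
    simp only [Real.negMulLog, Real.logb]
    field_simp

/-- crude lower bound on KL divergence -/
lemma klDiv_lower {α : Type*} [Fintype α] (p q : α → ℝ) (hp : ∀ a, 0 ≤ p a)
    (hpsum : ∑ a, p a = 1) (hq : ∀ a, 0 ≤ q a) (hac : ∀ a, p a = 0 → q a = 0) :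
    -(2 * Fintype.card α) ≤ klDiv q p := by
  have hterm : ∀ a : α, -2 ≤ q a * Real.logb 2 (q a / p a) := by
    intro a
    rcases eq_or_lt_of_le (hq a) with h0 | h0
    · rw [← h0]; norm_num
    · have hpa : 0 < p a := by
        rcases eq_or_lt_of_le (hp a) with h1 | h1
        · exact absurd (hac a h1.symm) h0.ne'
        · exact h1
      have hp1 : p a ≤ 1 := by
        rw [← hpsum]
        exact Finset.single_le_sum (fun i _ => hp i) (Finset.mem_univ a)
      have hd : q a ≤ q a / p a := by
        calc q a = q a / 1 := (div_one _).symm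
        _ ≤ q a / p a := div_le_div_of_nonneg_left h0.le hpa hp1
      have hlb : Real.logb 2 (q a) ≤ Real.logb 2 (q a / p a) :=
        Real.logb_le_logb_of_le one_lt_two h0 hd
      have h1 : q a * Real.logb 2 (q a) ≤ q a * Real.logb 2 (q a / p a) :=
        mul_le_mul_of_nonneg_left hlb h0.le
      refine le_trans ?_ h1
      -- q a * logb 2 (q a) = q a * log (q a) / log 2 ≥ (q a - 1)/log 2 ≥ -1/log 2 ≥ -2
      have hxlx : q a - 1 ≤ q a * Real.log (q a) := by
        have h3 := Real.log_le_sub_one_of_pos (inv_pos.2 h0)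
        rw [Real.log_inv] at h3
        have h2 := mul_le_mul_of_nonneg_left h3 h0.le
        rw [mul_sub, mul_inv_cancel₀ h0.ne', mul_neg] at h2
        linarith
      have hl2 : (0.6931471803 : ℝ) < Real.log 2 := Real.log_two_gt_d9
      have hl2' : (0:ℝ) < Real.log 2 := by linarith
      rw [Real.logb, mul_div_assoc', le_div_iff₀ hl2']
      nlinarith [hxlx, h0, hl2]
  calc -(2 * (Fintype.card α : ℝ)) = ∑ _a : α, (-2 : ℝ) := by
        simp [Finset.card_univ, mul_comm]
  _ ≤ klDiv q p := Finset.sum_le_sum fun a _ => hterm a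

/-- key continuity/compactness claim -/
lemma exists_delta {𝒳 𝒴 : Type*} [Fintype 𝒳] [Fintype 𝒴]
    (p : 𝒳 × 𝒴 → ℝ) (hp : ∀ z, 0 ≤ p z) (hpsum : ∑ z, p z = 1) (r ε2 : ℝ) (hε2 : 0 < ε2) :
    ∃ δ : ℝ, 0 < δ ∧ ∀ q : 𝒳 × 𝒴 → ℝ, (∀ v, 0 ≤ q v) → (∑ v, q v = 1) →
      (∀ v, p v = 0 → q v = 0) → r - δ ≤ condEnt q →
      sInf {z : ℝ | ∃ q : 𝒳 × 𝒴 → ℝ,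
        ((∀ v, 0 ≤ q v) ∧ (∑ v, q v = 1) ∧ (∀ v, p v = 0 → q v = 0)) ∧
        r ≤ condEnt q ∧ z = klDiv q p} - ε2 ≤ klDiv q p := by
  set T := {z : ℝ | ∃ q : 𝒳 × 𝒴 → ℝ,
        ((∀ v, 0 ≤ q v) ∧ (∑ v, q v = 1) ∧ (∀ v, p v = 0 → q v = 0)) ∧
        r ≤ condEnt q ∧ z = klDiv q p} with hT
  by_contra hcon
  push_neg at hcon
  -- hcon : ∀ δ > 0, ∃ q, ... ∧ klDiv q p < sInf T - ε2
  set E := sInf T with hE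
  set C : ℕ → Set ((𝒳 × 𝒴) → ℝ) := fun k =>
    {q | (∀ v, 0 ≤ q v) ∧ (∑ v, q v = 1) ∧ (∀ v, p v = 0 → q v = 0) ∧
      r - 1 / (k + 1) ≤ entAux q ∧ klAux p q ≤ E - ε2} with hC
  have hCne : ∀ k : ℕ, (C k).Nonempty := by
    intro k
    have hδ : (0:ℝ) < 1 / (k + 1) := by positivity
    obtain ⟨q, hq1, hq2, hq3, hq4, hq5⟩ := hcon (1 / (k + 1)) hδ
    exact ⟨q, hq1, hq2, hq3, by rwa [← condEnt_eq_entAux q hq1],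
      by rw [← klDiv_eq_klAux p q hp hq1 hq3]; linarith⟩
  have hCsub : ∀ k : ℕ, C (k + 1) ⊆ C k := by
    intro k q hq
    refine ⟨hq.1, hq.2.1, hq.2.2.1, le_trans ?_ hq.2.2.2.1, hq.2.2.2.2⟩
    have : (1:ℝ) / (k + 1 + 1) ≤ 1 / (k + 1) := by
      apply one_div_le_one_div_of_le <;> push_cast <;> linarith
    push_cast
    push_cast at this
    linarith
  have hCcl : ∀ k : ℕ, IsClosed (C k) := by
    intro k
    have hS1 : IsClosed {q : (𝒳 × 𝒴) → ℝ | ∀ v, 0 ≤ q v} := by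
      have he : {q : (𝒳 × 𝒴) → ℝ | ∀ v, 0 ≤ q v} = ⋂ v, {q | 0 ≤ q v} := by
        ext q; simp
      rw [he]
      exact isClosed_iInter fun v => isClosed_le continuous_const (continuous_apply v)
    have hS2 : IsClosed {q : (𝒳 × 𝒴) → ℝ | ∑ v, q v = 1} :=
      isClosed_eq (continuous_finset_sum _ fun v _ => continuous_apply v) continuous_const
    have hS3 : IsClosed {q : (𝒳 × 𝒴) → ℝ | ∀ v, p v = 0 → q v = 0} := by
      have he : {q : (𝒳 × 𝒴) → ℝ | ∀ v, p v = 0 → q v = 0}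
          = ⋂ v, {q | p v = 0 → q v = 0} := by ext q; simp
      rw [he]
      refine isClosed_iInter fun v => ?_
      by_cases hv : p v = 0
      · have he2 : {q : (𝒳 × 𝒴) → ℝ | p v = 0 → q v = 0} = {q | q v = 0} := by
          ext q; simp [hv]
        rw [he2]; exact isClosed_eq (continuous_apply v) continuous_const
      · have he2 : {q : (𝒳 × 𝒴) → ℝ | p v = 0 → q v = 0} = Set.univ := by
          ext q; simp [hv]
        rw [he2]; exact isClosed_univ
    have hS4 : IsClosed {q : (𝒳 × 𝒴) → ℝ | r - 1 / (k + 1) ≤ entAux q} :=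
      isClosed_le continuous_const continuous_entAux
    have hS5 : IsClosed {q : (𝒳 × 𝒴) → ℝ | klAux p q ≤ E - ε2} :=
      isClosed_le (continuous_klAux p) continuous_const
    have hCk : C k = ({q : (𝒳 × 𝒴) → ℝ | ∀ v, 0 ≤ q v} ∩ ({q | ∑ v, q v = 1} ∩
        ({q | ∀ v, p v = 0 → q v = 0} ∩ ({q | r - 1 / (k + 1) ≤ entAux q} ∩
          {q | klAux p q ≤ E - ε2})))) := by
      ext q; simp only [hC, Set.mem_setOf_eq, Set.mem_inter_iff]
    rw [hCk]
    exact hS1.inter (hS2.inter (hS3.inter (hS4.inter hS5)))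
  have hC0 : IsCompact (C 0) := by
    refine Metric.isCompact_of_isClosed_isBounded (hCcl 0) ?_
    refine isBounded_iff_forall_norm_le.2 ⟨1, fun q hq => ?_⟩
    refine (pi_norm_le_iff_of_nonneg zero_le_one).2 fun v => ?_
    rw [Real.norm_eq_abs, abs_le]
    have h1 : 0 ≤ q v := hq.1 v
    have h2 : q v ≤ 1 := by
      rw [← hq.2.1]
      exact Finset.single_le_sum (fun i _ => hq.1 i) (Finset.mem_univ v)
    constructor <;> linarith
  obtain ⟨q, hqmem⟩ :=
    IsCompact.nonempty_iInter_of_sequence_nonempty_isCompact_isClosed C hCsub hCne hC0 hCcl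
  simp only [Set.mem_iInter] at hqmem
  obtain ⟨hq1, hq2, hq3, -, hq5⟩ := hqmem 0
  have hent : r ≤ entAux q := by
    by_contra hlt
    push_neg at hlt
    obtain ⟨k, hk2⟩ := exists_nat_one_div_lt (sub_pos.2 hlt)
    have h4 := (hqmem k).2.2.2.1
    linarith
  have hmemT : klDiv q p ∈ T := by
    exact ⟨q, ⟨hq1, hq2, hq3⟩, by rwa [condEnt_eq_entAux q hq1], rfl⟩
  have hbdd : BddBelow T := by
    refine ⟨-(2 * Fintype.card (𝒳 × 𝒴)), fun z hz => ?_⟩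
    obtain ⟨q', hq', hr', rfl⟩ := hz
    exact klDiv_lower p q' hp hpsum hq'.1 hq'.2.2
  have hEle : E ≤ klDiv q p := csInf_le hbdd hmemT
  have hkl : klDiv q p ≤ E - ε2 := by
    rw [klDiv_eq_klAux p q hp hq1 hq3]; exact hq5
  linarith

noncomputable def cnt {Z : Type*} [Fintype Z] {n N : ℕ} (w : Fin n → Fin N → Z) (z : Z) : ℕ :=
  (Finset.univ.filter (fun ik : Fin n × Fin N => w ik.1 ik.2 = z)).card

lemma cnt_le {Z : Type*} [Fintype Z] {n N : ℕ} (w : Fin n → Fin N → Z) (z : Z) :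
    cnt w z ≤ n * N := by
  calc cnt w z ≤ (Finset.univ : Finset (Fin n × Fin N)).card := Finset.card_filter_le _ _
  _ = n * N := by simp

lemma cnt_sum {Z : Type*} [Fintype Z] {n N : ℕ} (w : Fin n → Fin N → Z) :
    ∑ z : Z, cnt w z = n * N := by
  simp only [cnt, Finset.card_filter]
  rw [Finset.sum_comm]
  simp

lemma prod_eq_prod_pow {Z : Type*} [Fintype Z] {n N : ℕ} (w : Fin n → Fin N → Z) (f : Z → ℝ) :
    ∏ i, ∏ k, f (w i k) = ∏ z : Z, f z ^ cnt w z := by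
  have h1 : ∏ i, ∏ k, f (w i k) = ∏ ik : Fin n × Fin N, f (w ik.1 ik.2) :=
    (Fintype.prod_prod_type (f := fun ik : Fin n × Fin N => f (w ik.1 ik.2))).symm
  rw [h1, Finset.prod_comp f (fun ik : Fin n × Fin N => w ik.1 ik.2)]
  have hvanish : ∀ z ∈ (Finset.univ : Finset Z),
      z ∉ (Finset.univ.image fun ik : Fin n × Fin N => w ik.1 ik.2) →
      f z ^ (Finset.univ.filter fun ik : Fin n × Fin N => w ik.1 ik.2 = z).card = 1 := by
    intro z _ hz
    have he : (Finset.univ.filter (fun ik : Fin n × Fin N => w ik.1 ik.2 = z)) = ∅ := by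
      rw [Finset.filter_eq_empty_iff]
      exact fun ik _ hik => hz (Finset.mem_image.2 ⟨ik, Finset.mem_univ _, hik⟩)
    rw [he]
    simp
  rw [Finset.prod_subset (Finset.subset_univ _) hvanish]
  rfl

lemma counting {Z : Type*} [Fintype Z] (n N : ℕ) (hM : 0 < n * N) :
    ∑ w : Fin n → Fin N → Z, ∏ z : Z, ((cnt w z : ℝ) / ((n * N : ℕ) : ℝ)) ^ cnt w z
      ≤ (((n * N : ℕ) : ℝ) + 1) ^ Fintype.card Z := by
  set M := n * N with hMdef
  have hMr : (0:ℝ) < (M : ℝ) := by exact_mod_cast hM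
  set τ : (Fin n → Fin N → Z) → (Z → Fin (M + 1)) :=
    fun w z => ⟨cnt w z, Nat.lt_succ_of_le (cnt_le w z)⟩ with hτ
  have key : ∀ t : Z → Fin (M + 1),
      (∑ w ∈ Finset.univ.filter (fun w => τ w = t),
        ∏ z : Z, ((cnt w z : ℝ) / (M : ℝ)) ^ cnt w z) ≤ 1 := by
    intro t
    rcases Finset.eq_empty_or_nonempty (Finset.univ.filter (fun w => τ w = t)) with he | hne
    · rw [he, Finset.sum_empty]; norm_num
    · obtain ⟨w₀, hw₀⟩ := hne
      have hw₀t : ∀ z, cnt w₀ z = (t z : ℕ) := by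
        intro z
        have h := (Finset.mem_filter.1 hw₀).2
        rw [← h]
      set qt : Z → ℝ := fun z => ((t z : ℕ) : ℝ) / (M : ℝ) with hqt
      have hsum_t : ∑ z, qt z = 1 := by
        rw [hqt]
        simp only
        rw [← Finset.sum_div, div_eq_one_iff_eq hMr.ne']
        have h2 : ∑ z, ((t z : ℕ) : ℝ) = ((∑ z, (t z : ℕ) : ℕ) : ℝ) := by push_cast; rfl
        rw [h2]
        have h3 : ∑ z, (t z : ℕ) = M := by
          calc ∑ z, (t z : ℕ) = ∑ z, cnt w₀ z :=
                Finset.sum_congr rfl fun z _ => (hw₀t z).symm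
            _ = n * N := cnt_sum w₀
            _ = M := hMdef.symm
        rw [h3]
      calc ∑ w ∈ Finset.univ.filter (fun w => τ w = t),
            ∏ z : Z, ((cnt w z : ℝ) / (M : ℝ)) ^ cnt w z
          = ∑ w ∈ Finset.univ.filter (fun w => τ w = t), ∏ i, ∏ k, qt (w i k) := by
            refine Finset.sum_congr rfl fun w hw => ?_
            have hwt : ∀ z, cnt w z = (t z : ℕ) := by
              intro z
              have h := (Finset.mem_filter.1 hw).2
              rw [← h]
            rw [prod_eq_prod_pow w qt]
            exact Finset.prod_congr rfl fun z _ => by rw [hqt]; simp only; rw [hwt z]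
        _ ≤ ∑ w : Fin n → Fin N → Z, ∏ i, ∏ k, qt (w i k) := by
            refine Finset.sum_le_sum_of_subset_of_nonneg (Finset.subset_univ _)
              fun w _ _ => Finset.prod_nonneg fun i _ => Finset.prod_nonneg fun k _ =>
                div_nonneg (Nat.cast_nonneg _) hMr.le
        _ = ∏ i : Fin n, ∑ v : Fin N → Z, ∏ k, qt (v k) :=
            (Fintype.prod_sum (f := fun (_i : Fin n) (v : Fin N → Z) => ∏ k, qt (v k))).symm
        _ = ∏ i : Fin n, ∏ k : Fin N, ∑ z : Z, qt z := by
            refine Finset.prod_congr rfl fun i _ => ?_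
            exact (Fintype.prod_sum (f := fun (_k : Fin N) (z : Z) => qt z)).symm
        _ = 1 := by simp [hsum_t]
  calc ∑ w : Fin n → Fin N → Z, ∏ z : Z, ((cnt w z : ℝ) / (M : ℝ)) ^ cnt w z
      = ∑ t : Z → Fin (M + 1), ∑ w ∈ Finset.univ.filter (fun w => τ w = t),
          ∏ z : Z, ((cnt w z : ℝ) / (M : ℝ)) ^ cnt w z :=
        (Finset.sum_fiberwise _ τ _).symm
    _ ≤ ∑ _t : Z → Fin (M + 1), (1:ℝ) := Finset.sum_le_sum fun t _ => key t
    _ = ((M : ℝ) + 1) ^ Fintype.card Z := by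
        rw [Finset.sum_const, Finset.card_univ, Fintype.card_fun]
        push_cast
        simp

lemma prod_two_rpow {ι : Type*} (s : Finset ι) (f : ι → ℝ) :
    ∏ i ∈ s, (2:ℝ) ^ f i = 2 ^ (∑ i ∈ s, f i) := by
  induction s using Finset.cons_induction with
  | empty => simp
  | cons a s ha ih => rw [Finset.prod_cons, Finset.sum_cons, ih, ← Real.rpow_add two_pos]

lemma logb_add_one_le {x : ℝ} (hx : 0 ≤ x) :
    Real.logb 2 (x + 1) ≤ 2 * Real.sqrt (x + 1) / Real.log 2 := by
  have h1 : (0:ℝ) < x + 1 := by linarith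
  have hs : 0 < Real.sqrt (x + 1) := Real.sqrt_pos.2 h1
  have h2 : Real.log (x + 1) = 2 * Real.log (Real.sqrt (x + 1)) := by
    rw [Real.log_sqrt h1.le]; ring
  have h3 : Real.log (Real.sqrt (x + 1)) ≤ Real.sqrt (x + 1) :=
    le_trans (Real.log_le_sub_one_of_pos hs) (by linarith)
  rw [Real.logb, h2]
  exact div_le_div_of_nonneg_right (by linarith) (Real.log_pos one_lt_two).le

lemma sqrt_add_one_le {x : ℝ} (hx : 0 ≤ x) : Real.sqrt (x + 1) ≤ Real.sqrt x + 1 := by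
  nlinarith [Real.sq_sqrt hx, Real.sq_sqrt (by linarith : (0:ℝ) ≤ x + 1),
    Real.sqrt_nonneg x, Real.sqrt_nonneg (x + 1)]

set_option maxHeartbeats 2000000 in
/-- Lemma 1, large-deviations bound for accumulated codeword lengths:
for `H(p_{X|Y}) < r < log₂|𝒳|` and `ε > 0` there exist a block length `N` and `K < ∞`
such that any fixed-to-variable code whose lengths are sandwiched between the empirical
conditional entropy and that plus the `(2 + |𝒳||𝒴|log₂(N+1))/N` overhead satisfies
`P(Σ_{i=1}^n l(X⃗_i,Y⃗_i) > nNr) ≤ K·2^{−nN(E^u_{si,b}(r) − ε)}`, where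
`E^u_{si,b}(r) = min_{q : H(q_{X|Y}) ≥ r} D(q‖p)`. -/
theorem accumulated_length_large_deviations
    {𝒳 𝒴 : Type*} [Fintype 𝒳] [Fintype 𝒴] [Nonempty 𝒳] [Nonempty 𝒴]
    (p : 𝒳 × 𝒴 → ℝ) (hp : ∀ z, 0 ≤ p z) (hpsum : ∑ z, p z = 1)
    (r : ℝ) (hr1 : condEnt p < r) (hr2 : r < Real.logb 2 (Fintype.card 𝒳))
    (ε : ℝ) (hε : 0 < ε) :
    ∃ N : ℕ, 0 < N ∧ ∃ K : ℝ,
      ∀ l : (Fin N → 𝒳) → (Fin N → 𝒴) → ℝ,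
        (∀ (xv : Fin N → 𝒳) (yv : Fin N → 𝒴),
          (N : ℝ) * condEnt (empDist xv yv) ≤ l xv yv ∧
          l xv yv ≤ (N : ℝ) * (condEnt (empDist xv yv)
            + (2 + (Fintype.card 𝒳 : ℝ) * (Fintype.card 𝒴 : ℝ)
                * Real.logb 2 ((N : ℝ) + 1)) / (N : ℝ))) →
        ∀ n : ℕ, 1 ≤ n →
          (∑ w : Fin n → Fin N → 𝒳 × 𝒴,
            if (n : ℝ) * (N : ℝ) * r
                < ∑ i, l (fun k => (w i k).1) (fun k => (w i k).2)
            then ∏ i, ∏ k, p (w i k) else 0)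
          ≤ K * 2 ^ (-(n : ℝ) * (N : ℝ) *
              (sInf {z : ℝ | ∃ q : 𝒳 × 𝒴 → ℝ,
                  ((∀ v, 0 ≤ q v) ∧ (∑ v, q v = 1) ∧ (∀ v, p v = 0 → q v = 0)) ∧
                  r ≤ condEnt q ∧ z = klDiv q p} - ε)) := by
  classical
  obtain ⟨δ, hδpos, hclaim⟩ := exists_delta p hp hpsum r (ε/2) (half_pos hε)
  have hl2 : (0:ℝ) < Real.log 2 := Real.log_pos one_lt_two
  set c : ℝ := (Fintype.card 𝒳 : ℝ) * (Fintype.card 𝒴 : ℝ) with hc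
  have hcpos : 0 < c := by
    have h1 : (0:ℝ) < (Fintype.card 𝒳 : ℝ) := by exact_mod_cast Fintype.card_pos
    have h2 : (0:ℝ) < (Fintype.card 𝒴 : ℝ) := by exact_mod_cast Fintype.card_pos
    exact mul_pos h1 h2
  set E : ℝ := sInf {z : ℝ | ∃ q : 𝒳 × 𝒴 → ℝ,
      ((∀ v, 0 ≤ q v) ∧ (∑ v, q v = 1) ∧ (∀ v, p v = 0 → q v = 0)) ∧
      r ≤ condEnt q ∧ z = klDiv q p} with hE
  set B : ℝ := max ((2 + 4 * c / Real.log 2) / δ) (4 * c / (ε * Real.log 2)) with hB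
  set N : ℕ := (⌈B⌉₊ + 1) ^ 2 with hN
  have hNpos : 0 < N := by positivity
  have hNr : (0:ℝ) < (N : ℝ) := by exact_mod_cast hNpos
  have hsqrtN : Real.sqrt (N : ℝ) = ((⌈B⌉₊ : ℝ) + 1) := by
    rw [hN]; push_cast; exact Real.sqrt_sq (by positivity)
  have hsq1 : 1 ≤ Real.sqrt (N:ℝ) := by
    rw [hsqrtN]
    have : (0:ℝ) ≤ (⌈B⌉₊ : ℝ) := Nat.cast_nonneg _
    linarith
  have hBle : B ≤ Real.sqrt (N:ℝ) := by
    rw [hsqrtN]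
    have := Nat.le_ceil B
    linarith
  have hmulself : Real.sqrt (N:ℝ) * Real.sqrt (N:ℝ) = (N:ℝ) := Real.mul_self_sqrt hNr.le
  have hmax1 : (2 + 4 * c / Real.log 2) / δ ≤ Real.sqrt (N:ℝ) :=
    (le_max_left _ (4 * c / (ε * Real.log 2))).trans hBle
  have hmax2 : 4 * c / (ε * Real.log 2) ≤ Real.sqrt (N:ℝ) :=
    (le_max_right ((2 + 4 * c / Real.log 2) / δ) _).trans hBle
  clear_value B N E c
  refine ⟨N, hNpos, (2:ℝ) ^ (2 * c / Real.log 2), ?_⟩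
  intro l hl n hn
  set εN : ℝ := (2 + c * Real.logb 2 ((N:ℝ) + 1)) / (N:ℝ) with hεNdef
  clear_value εN
  -- Step (i) : εN ≤ δ
  have hlogN : c * Real.logb 2 ((N:ℝ) + 1) ≤ 4 * c / Real.log 2 * Real.sqrt (N:ℝ) := by
    have h1 := logb_add_one_le hNr.le
    have h2 := sqrt_add_one_le hNr.le
    have h3 : Real.logb 2 ((N:ℝ)+1) ≤ 2 * (Real.sqrt (N:ℝ) + 1) / Real.log 2 :=
      h1.trans (div_le_div_of_nonneg_right (by linarith) hl2.le)
    have h4 := mul_le_mul_of_nonneg_left h3 hcpos.le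
    refine h4.trans ?_
    calc c * (2 * (Real.sqrt (N:ℝ) + 1) / Real.log 2)
        = 2 * c * (Real.sqrt (N:ℝ) + 1) / Real.log 2 := by ring
      _ ≤ 4 * c * Real.sqrt (N:ℝ) / Real.log 2 := by
          refine div_le_div_of_nonneg_right ?_ hl2.le
          nlinarith [mul_nonneg hcpos.le (by linarith : (0:ℝ) ≤ Real.sqrt (N:ℝ) - 1)]
      _ = 4 * c / Real.log 2 * Real.sqrt (N:ℝ) := by ring
  have hεNδ : εN ≤ δ := by
    rw [hεNdef, div_le_iff₀ hNr]
    have k1 : (2 + 4 * c / Real.log 2) ≤ δ * Real.sqrt (N:ℝ) := by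
      have h := hmax1
      rw [div_le_iff₀ hδpos] at h
      linarith [h]
    have k2 := mul_le_mul_of_nonneg_right k1 (Real.sqrt_nonneg ((N:ℕ):ℝ))
    have k3 : δ * (Real.sqrt (N:ℝ) * Real.sqrt (N:ℝ)) = δ * (N:ℝ) := by rw [hmulself]
    nlinarith [hlogN, hsq1, k2, k3]
  -- abbreviations for this n
  have hn0 : 0 < n := hn
  have hMn : 0 < n * N := Nat.mul_pos hn0 hNpos
  set Mr : ℝ := ((n * N : ℕ) : ℝ) with hMr
  have hMrpos : (0:ℝ) < Mr := by rw [hMr]; exact_mod_cast hMn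
  have hMrnN : Mr = (n:ℝ) * (N:ℝ) := by rw [hMr]; push_cast; ring
  have hMrN : (N:ℝ) ≤ Mr := by
    rw [hMrnN]
    have h1 : (1:ℝ) ≤ (n:ℝ) := by exact_mod_cast hn
    nlinarith [hNr]
  clear_value Mr
  -- Step (ii) : polynomial bound
  have hcZ : ((Fintype.card (𝒳 × 𝒴) : ℕ) : ℝ) = c := by
    rw [hc, Fintype.card_prod]; push_cast; ring
  have s1 : Real.logb 2 (Mr + 1) ≤ 2 * (Real.sqrt Mr + 1) / Real.log 2 :=
    (logb_add_one_le hMrpos.le).trans (div_le_div_of_nonneg_right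
      (by have := sqrt_add_one_le hMrpos.le; linarith) hl2.le)
  have s2 : Real.sqrt Mr * Real.sqrt (N:ℝ) ≤ Mr := by
    calc Real.sqrt Mr * Real.sqrt (N:ℝ) ≤ Real.sqrt Mr * Real.sqrt Mr :=
          mul_le_mul_of_nonneg_left (Real.sqrt_le_sqrt hMrN) (Real.sqrt_nonneg _)
      _ = Mr := Real.mul_self_sqrt hMrpos.le
  have s3 : 4 * c ≤ Real.sqrt (N:ℝ) * (ε * Real.log 2) := by
    have h := hmax2
    rwa [div_le_iff₀ (by positivity)] at h
  have s4 : 2 * c / Real.log 2 * Real.sqrt Mr ≤ Mr * (ε/2) := by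
    have t1 := mul_le_mul_of_nonneg_right s3 (Real.sqrt_nonneg Mr)
    have t2 : Real.sqrt (N:ℝ) * (ε * Real.log 2) * Real.sqrt Mr ≤ Mr * (ε * Real.log 2) := by
      have h := mul_le_mul_of_nonneg_right s2 (by positivity : (0:ℝ) ≤ ε * Real.log 2)
      nlinarith [h]
    rw [div_mul_eq_mul_div, div_le_iff₀ hl2]
    nlinarith [t1, t2]
  have hpoly : Real.logb 2 (Mr + 1) * ((Fintype.card (𝒳 × 𝒴) : ℕ) : ℝ)
      ≤ Mr * (ε/2) + 2 * c / Real.log 2 := by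
    rw [hcZ]
    have h := mul_le_mul_of_nonneg_left s1 hcpos.le
    have hid : c * (2 * (Real.sqrt Mr + 1) / Real.log 2)
        = 2 * c / Real.log 2 * Real.sqrt Mr + 2 * c / Real.log 2 := by ring
    rw [hid] at h
    linarith
  -- termwise key bound
  have key : ∀ w : Fin n → Fin N → 𝒳 × 𝒴,
      (if (n : ℝ) * (N : ℝ) * r < ∑ i, l (fun k => (w i k).1) (fun k => (w i k).2)
        then ∏ i, ∏ k, p (w i k) else 0)
      ≤ (2:ℝ) ^ (-(Mr * (E - ε/2))) * ∏ z, ((cnt w z : ℝ) / Mr) ^ cnt w z := by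
    intro w
    have hprod_nonneg : (0:ℝ) ≤ ∏ z, ((cnt w z : ℝ) / Mr) ^ cnt w z :=
      Finset.prod_nonneg fun z _ => pow_nonneg (div_nonneg (Nat.cast_nonneg _) hMrpos.le) _
    have hrpow_nonneg : (0:ℝ) ≤ (2:ℝ) ^ (-(Mr * (E - ε/2))) :=
      Real.rpow_nonneg (by norm_num) _
    split_ifs with hev
    · by_cases hsupp : ∀ z, p z = 0 → cnt w z = 0
      · -- main case
        set qh : 𝒳 × 𝒴 → ℝ := fun z => (cnt w z : ℝ) / Mr with hqh
        have hqh0 : ∀ v, 0 ≤ qh v := fun v => div_nonneg (Nat.cast_nonneg _) hMrpos.le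
        have hqh1 : ∑ v, qh v = 1 := by
          simp only [hqh]
          rw [← Finset.sum_div, div_eq_one_iff_eq hMrpos.ne', hMr]
          exact_mod_cast cnt_sum w
        have hqhac : ∀ v, p v = 0 → qh v = 0 := fun v hv => by
          simp only [hqh, hsupp v hv]; norm_num
        -- conditional entropy of empirical distribution
        set bc : Fin n → 𝒳 × 𝒴 → ℝ :=
          fun i z => ((Finset.univ.filter fun k : Fin N => w i k = z).card : ℝ) with hbc
        have hbc_emp : ∀ i, bc i
            = fun z => (N:ℝ) * empDist (fun k => (w i k).1) (fun k => (w i k).2) z := by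
          intro i; funext z
          simp only [hbc, empDist]
          rw [mul_div_cancel₀ _ hNr.ne']
        have hcnt_split : ∀ z, cnt w z
            = ∑ i, (Finset.univ.filter fun k : Fin N => w i k = z).card := by
          intro z
          unfold cnt
          rw [Finset.card_filter, Fintype.sum_prod_type]
          refine Finset.sum_congr rfl fun i _ => ?_
          rw [Finset.card_filter]
          refine Finset.sum_congr rfl fun k _ => ?_
          by_cases hwk : w i k = z
          · rw [if_pos hwk, if_pos (show w (i, k).1 (i, k).2 = z from hwk)]
          · rw [if_neg hwk, if_neg (show ¬ w (i, k).1 (i, k).2 = z from hwk)]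
        have hbc_cnt : (fun z => ∑ i, bc i z) = fun z => (cnt w z : ℝ) := by
          funext z
          simp only [hbc]
          rw [← Nat.cast_sum, hcnt_split z]
        have hblocks : ∑ i, condEnt (bc i) ≤ condEnt (fun z => (cnt w z : ℝ)) := by
          have h := sum_condEnt_le Finset.univ bc (fun i z => Nat.cast_nonneg _)
          rwa [hbc_cnt] at h
        have hsm : condEnt (fun z => (cnt w z : ℝ)) = Mr * condEnt qh := by
          rw [← condEnt_smul hMrpos qh]
          congr 1
          funext z
          simp only [hqh]
          rw [mul_div_cancel₀ _ hMrpos.ne']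
        have hlen : ∀ i, l (fun k => (w i k).1) (fun k => (w i k).2) - (N:ℝ) * εN
            ≤ condEnt (bc i) := by
          intro i
          have h := (hl (fun k => (w i k).1) (fun k => (w i k).2)).2
          rw [mul_add] at h
          have h2 : condEnt (bc i)
              = (N:ℝ) * condEnt (empDist (fun k => (w i k).1) (fun k => (w i k).2)) := by
            rw [hbc_emp i]
            exact condEnt_smul hNr _
          rw [h2]
          linarith
        have hsum_len : Mr * (r - δ) ≤ condEnt (fun z => (cnt w z : ℝ)) := by
          have h1 : ∑ i : Fin n, (l (fun k => (w i k).1) (fun k => (w i k).2) - (N:ℝ) * εN)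
              ≤ ∑ i, condEnt (bc i) := Finset.sum_le_sum fun i _ => hlen i
          rw [Finset.sum_sub_distrib, Finset.sum_const, Finset.card_univ,
            Fintype.card_fin, nsmul_eq_mul] at h1
          have h2 := h1.trans hblocks
          have h3 : Mr * εN ≤ Mr * δ := mul_le_mul_of_nonneg_left hεNδ hMrpos.le
          have h4 : (n:ℝ) * ((N:ℝ) * εN) = Mr * εN := by rw [hMrnN]; ring
          have h5 : Mr * r < ∑ i, l (fun k => (w i k).1) (fun k => (w i k).2) := by
            rw [hMrnN]; exact hev
          linarith [h2, h3, h4, h5]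
        have hcond : r - δ ≤ condEnt qh := by
          have h := hsum_len
          rw [hsm] at h
          exact (mul_le_mul_iff_right₀ hMrpos).1 h
        have hkl : E - ε/2 ≤ klDiv qh p := hclaim qh hqh0 hqh1 hqhac hcond
        -- product bound
        set Sp := Finset.univ.filter (fun z : 𝒳 × 𝒴 => cnt w z ≠ 0) with hS
        have hmemS : ∀ z, z ∈ Sp ↔ cnt w z ≠ 0 := by
          intro z; rw [hS, Finset.mem_filter]; simp
        have hp_pos : ∀ z ∈ Sp, 0 < p z := by
          intro z hz
          rcases (hp z).eq_or_lt with h0 | h0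
          · exact absurd (hsupp z h0.symm) ((hmemS z).1 hz)
          · exact h0
        have hq_pos : ∀ z ∈ Sp, 0 < qh z := by
          intro z hz
          have : 0 < cnt w z := Nat.pos_of_ne_zero ((hmemS z).1 hz)
          exact div_pos (by exact_mod_cast this) hMrpos
        have e1 : ∏ z, p z ^ cnt w z = ∏ z ∈ Sp, p z ^ cnt w z := by
          refine (Finset.prod_subset (Finset.filter_subset _ _) fun z _ hz => ?_).symm
          have h0 : cnt w z = 0 := by
            by_contra hcc
            exact hz ((hmemS z).2 hcc)
          rw [h0, pow_zero]
        have e2 : ∏ z, qh z ^ cnt w z = ∏ z ∈ Sp, qh z ^ cnt w z := by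
          refine (Finset.prod_subset (Finset.filter_subset _ _) fun z _ hz => ?_).symm
          have h0 : cnt w z = 0 := by
            by_contra hcc
            exact hz ((hmemS z).2 hcc)
          rw [h0, pow_zero]
        have e3 : ∀ z ∈ Sp, p z ^ cnt w z
            = qh z ^ cnt w z * (2:ℝ) ^ (-((cnt w z : ℝ) * Real.logb 2 (qh z / p z))) := by
          intro z hz
          have hpz := hp_pos z hz
          have hqz := hq_pos z hz
          have hfrac : qh z * (p z / qh z) = p z := mul_div_cancel₀ _ hqz.ne'
          calc p z ^ cnt w z = (qh z * (p z / qh z)) ^ cnt w z := by rw [hfrac]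
            _ = qh z ^ cnt w z * (p z / qh z) ^ cnt w z := mul_pow _ _ _
            _ = qh z ^ cnt w z * (2:ℝ) ^ (-((cnt w z : ℝ) * Real.logb 2 (qh z / p z))) := by
                congr 1
                have hd : 0 < p z / qh z := div_pos hpz hqz
                conv_lhs => rw [← Real.rpow_logb two_pos (by norm_num) hd]
                rw [← Real.rpow_natCast ((2:ℝ) ^ Real.logb 2 (p z / qh z)) (cnt w z),
                  ← Real.rpow_mul (by norm_num : (0:ℝ) ≤ 2)]
                congr 1
                have hinv : Real.logb 2 (p z / qh z) = -Real.logb 2 (qh z / p z) := by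
                  rw [← Real.logb_inv, inv_div]
                rw [hinv]; ring
        have e4 : ∏ z ∈ Sp, p z ^ cnt w z = (∏ z ∈ Sp, qh z ^ cnt w z)
            * (2:ℝ) ^ (-(∑ z ∈ Sp, (cnt w z : ℝ) * Real.logb 2 (qh z / p z))) := by
          rw [Finset.prod_congr rfl e3, Finset.prod_mul_distrib, prod_two_rpow]
          congr 2
          rw [← Finset.sum_neg_distrib]
        have e5 : ∑ z ∈ Sp, (cnt w z : ℝ) * Real.logb 2 (qh z / p z) = Mr * klDiv qh p := by
          have h1 : klDiv qh p = ∑ z ∈ Sp, qh z * Real.logb 2 (qh z / p z) := by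
            refine (Finset.sum_subset (Finset.filter_subset _ _) fun z _ hz => ?_).symm
            have h0 : cnt w z = 0 := by
              by_contra hcc
              exact hz ((hmemS z).2 hcc)
            simp only [hqh, h0]
            norm_num
          rw [h1, Finset.mul_sum]
          refine Finset.sum_congr rfl fun z hz => ?_
          simp only [hqh]
          rw [← mul_assoc, mul_div_cancel₀ _ hMrpos.ne']
        have hexp_le : (2:ℝ) ^ (-(Mr * klDiv qh p)) ≤ (2:ℝ) ^ (-(Mr * (E - ε/2))) := by
          refine Real.rpow_le_rpow_of_exponent_le one_le_two ?_
          have h := mul_le_mul_of_nonneg_left hkl hMrpos.le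
          linarith
        calc ∏ i, ∏ k, p (w i k) = ∏ z, p z ^ cnt w z := prod_eq_prod_pow w p
          _ = ∏ z ∈ Sp, p z ^ cnt w z := e1
          _ = (∏ z ∈ Sp, qh z ^ cnt w z) * (2:ℝ) ^ (-(Mr * klDiv qh p)) := by rw [e4, e5]
          _ ≤ (∏ z ∈ Sp, qh z ^ cnt w z) * (2:ℝ) ^ (-(Mr * (E - ε/2))) :=
              mul_le_mul_of_nonneg_left hexp_le
                (Finset.prod_nonneg fun z _ => pow_nonneg (hqh0 z) _)
          _ = (2:ℝ) ^ (-(Mr * (E - ε/2))) * ∏ z, qh z ^ cnt w z := by rw [← e2]; ring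
          _ = (2:ℝ) ^ (-(Mr * (E - ε/2))) * ∏ z, ((cnt w z : ℝ) / Mr) ^ cnt w z := by
              simp only [hqh]
      · -- a zero-probability symbol occurs
        push_neg at hsupp
        obtain ⟨z0, hz0p, hz0c⟩ := hsupp
        rw [prod_eq_prod_pow w p]
        have h0 : ∏ z, p z ^ cnt w z = 0 :=
          Finset.prod_eq_zero (Finset.mem_univ z0) (by rw [hz0p]; exact zero_pow hz0c)
        rw [h0]
        exact mul_nonneg hrpow_nonneg hprod_nonneg
    · exact mul_nonneg hrpow_nonneg hprod_nonneg
  -- sum up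
  have hcount := counting (Z := 𝒳 × 𝒴) n N hMn
  rw [← hMr] at hcount
  calc (∑ w : Fin n → Fin N → 𝒳 × 𝒴,
        if (n : ℝ) * (N : ℝ) * r < ∑ i, l (fun k => (w i k).1) (fun k => (w i k).2)
        then ∏ i, ∏ k, p (w i k) else 0)
      ≤ ∑ w : Fin n → Fin N → 𝒳 × 𝒴,
          (2:ℝ) ^ (-(Mr * (E - ε/2))) * ∏ z, ((cnt w z : ℝ) / Mr) ^ cnt w z :=
        Finset.sum_le_sum fun w _ => key w
    _ = (2:ℝ) ^ (-(Mr * (E - ε/2)))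
        * ∑ w : Fin n → Fin N → 𝒳 × 𝒴, ∏ z, ((cnt w z : ℝ) / Mr) ^ cnt w z :=
        (Finset.mul_sum _ _ _).symm
    _ ≤ (2:ℝ) ^ (-(Mr * (E - ε/2))) * ((Mr + 1) ^ Fintype.card (𝒳 × 𝒴)) :=
        mul_le_mul_of_nonneg_left hcount (Real.rpow_nonneg (by norm_num) _)
    _ ≤ (2:ℝ) ^ (-(Mr * (E - ε/2))) * (2:ℝ) ^ (Mr * (ε/2) + 2 * c / Real.log 2) := by
        refine mul_le_mul_of_nonneg_left ?_ (Real.rpow_nonneg (by norm_num) _)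
        have hpos : (0:ℝ) < Mr + 1 := by linarith
        have hconv : (Mr + 1) ^ Fintype.card (𝒳 × 𝒴)
            = (2:ℝ) ^ (Real.logb 2 (Mr + 1) * ((Fintype.card (𝒳 × 𝒴) : ℕ) : ℝ)) := by
          conv_lhs => rw [← Real.rpow_natCast (Mr + 1) (Fintype.card (𝒳 × 𝒴)),
            ← Real.rpow_logb two_pos (by norm_num) hpos]
          rw [← Real.rpow_mul (by norm_num : (0:ℝ) ≤ 2)]
        rw [hconv]
        exact Real.rpow_le_rpow_of_exponent_le one_le_two hpoly
    _ = (2:ℝ) ^ (2 * c / Real.log 2) * (2:ℝ) ^ (-(Mr * (E - ε))) := by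
        rw [← Real.rpow_add two_pos, ← Real.rpow_add two_pos]
        congr 1
        ring
    _ = (2:ℝ) ^ (2 * c / Real.log 2) * (2:ℝ) ^ (-(n : ℝ) * (N : ℝ) * (E - ε)) := by
        congr 2
        rw [hMrnN]
        ring
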